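/- Let σ > 0, τ > 0, μ ∈ ℝ and α ∈ (0,1). Suppose c ∈ ℝ satisfies [Φ(c/σ + μσ/τ²) + Φ(c/σ − μσ/τ²)]/2 = 1 − α/2. If Y is a real random variable with the normal distribution N(0, σ²), then P(|Y + μσ²/τ²| > c) = α; that is, the FAB test that rejects when |Y + μσ²/τ²| > c has size exactly α under the null hypothesis θ = 0. -/

import Mathlib

open MeasureTheory ProbabilityTheory

/-- Φ, the standard normal cumulative distribution function. -/
noncomputable def Phi : ℝ → ℝ := fun x => ProbabilityTheory.cdf (gaussianReal 0 1) x

lemma Phi_nonneg (x : ℝ) : 0 ≤ Phi x := cdf_nonneg _ _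
lemma Phi_le_one (x : ℝ) : Phi x ≤ 1 := cdf_le_one _ _

lemma gauss_singleton (v : NNReal) (hv : v ≠ 0) (x : ℝ) :
    gaussianReal 0 v {x} = 0 :=
  gaussianReal_absolutelyContinuous 0 hv (measure_singleton x)

lemma gauss_Iio (v : NNReal) (hv : v ≠ 0) (x : ℝ) :
    gaussianReal 0 v (Set.Iio x) = gaussianReal 0 v (Set.Iic x) := by
  rw [← Set.Iio_union_right, measure_union (by simp) (measurableSet_singleton x),
    gauss_singleton v hv x, add_zero]

lemma ofReal_Phi (x : ℝ) : ENNReal.ofReal (Phi x) = gaussianReal 0 1 (Set.Iic x) :=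
  ofReal_cdf _ _

lemma Phi_symm (x : ℝ) : Phi x + Phi (-x) = 1 := by
  have hmap : (gaussianReal 0 1).map (fun y => -y) = gaussianReal 0 1 := by
    have := gaussianReal_map_const_mul (μ := 0) (v := 1) (-1)
    simp only [neg_mul, one_mul, mul_zero] at this
    convert this using 2
    ext
    norm_num
  have h1 : gaussianReal 0 1 (Set.Iic (-x)) = gaussianReal 0 1 (Set.Ici x) := by
    conv_lhs => rw [← hmap]
    rw [Measure.map_apply measurable_neg measurableSet_Iic]
    congr 1
    ext y
    simp [neg_le]
  have h2 : gaussianReal 0 1 (Set.Iio x) + gaussianReal 0 1 (Set.Ici x) = 1 := by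
    rw [← Set.compl_Ici (a := x), add_comm, measure_add_measure_compl measurableSet_Ici, measure_univ]
  have h3 := gauss_Iio 1 one_ne_zero x
  have : ENNReal.ofReal (Phi x) + ENNReal.ofReal (Phi (-x)) = 1 := by
    rw [ofReal_Phi, ofReal_Phi, h1, ← h3, h2]
  rw [← ENNReal.ofReal_add (Phi_nonneg x) (Phi_nonneg (-x)), ← ENNReal.ofReal_one] at this
  have := ENNReal.ofReal_eq_ofReal_iff (add_nonneg (Phi_nonneg x) (Phi_nonneg (-x))) (by norm_num) |>.mp this
  linarith

lemma gauss_Iic_eq (σ : ℝ) (hσ : 0 < σ) (x : ℝ) :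
    gaussianReal 0 ((σ ^ 2 : ℝ).toNNReal) (Set.Iic x) = ENNReal.ofReal (Phi (x / σ)) := by
  have hmap : (gaussianReal 0 1).map (fun y => σ * y) = gaussianReal 0 ((σ ^ 2 : ℝ).toNNReal) := by
    have := gaussianReal_map_const_mul (μ := 0) (v := 1) σ
    rw [mul_zero] at this
    convert this using 2
    ext
    simp [Real.coe_toNNReal _ (sq_nonneg σ)]
  rw [← hmap, Measure.map_apply (measurable_const_mul σ) measurableSet_Iic]
  have : (fun y => σ * y) ⁻¹' Set.Iic x = Set.Iic (x / σ) := by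
    ext y
    simp [Set.mem_preimage, le_div_iff₀' hσ]
  rw [this, ofReal_Phi]

theorem stmt_0 {Ω : Type*} [MeasurableSpace Ω] (P : Measure Ω) [IsProbabilityMeasure P]
    (σ τ μ α c : ℝ) (hσ : 0 < σ) (hτ : 0 < τ) (hα : α ∈ Set.Ioo (0 : ℝ) 1)
    (hc : (Phi (c / σ + μ * σ / τ ^ 2) + Phi (c / σ - μ * σ / τ ^ 2)) / 2 = 1 - α / 2)
    (Y : Ω → ℝ) (hY : P.map Y = gaussianReal 0 ((σ ^ 2 : ℝ).toNNReal)) :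
    P {ω | |Y ω + μ * σ ^ 2 / τ ^ 2| > c} = ENNReal.ofReal α := by
  obtain ⟨hα0, hα1⟩ := hα
  set b := μ * σ ^ 2 / τ ^ 2 with hb
  have hbσ : c / σ + μ * σ / τ ^ 2 = (c + b) / σ := by
    field_simp [hb]
    rw [hb]; field_simp
  have hbσ' : c / σ - μ * σ / τ ^ 2 = (c - b) / σ := by
    field_simp [hb]
    rw [hb]; field_simp
  rw [hbσ, hbσ'] at hc
  have hc' : Phi ((c + b) / σ) + Phi ((c - b) / σ) = 2 - α := by linarith
  -- c > 0
  have hsymm : Phi ((-c - b) / σ) = 1 - Phi ((c + b) / σ) := by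
    have hx : (-c - b) / σ = -((c + b) / σ) := by ring
    have := Phi_symm ((c + b) / σ)
    rw [hx]; linarith
  have hcpos : 0 < c := by
    by_contra h
    push_neg at h
    have h1 : (c - b) / σ ≤ (-c - b) / σ := by gcongr; linarith
    have h2 : Phi ((c - b) / σ) ≤ Phi ((-c - b) / σ) := monotone_cdf _ h1
    linarith
  -- measurability of Y
  have hYm : AEMeasurable Y P := by
    by_contra h
    rw [Measure.map_of_not_aemeasurable h] at hY
    have : (gaussianReal 0 ((σ ^ 2 : ℝ).toNNReal)) Set.univ = 1 := measure_univ
    rw [← hY] at this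
    simp at this
  have hv : ((σ ^ 2 : ℝ).toNNReal) ≠ 0 := by
    simp only [ne_eq, Real.toNNReal_eq_zero, not_le]
    positivity
  set ν := gaussianReal 0 ((σ ^ 2 : ℝ).toNNReal) with hν
  -- the event as a set in ℝ
  have hset : {x : ℝ | |x + b| > c} = Set.Iio (-c - b) ∪ Set.Ioi (c - b) := by
    ext x
    simp only [Set.mem_setOf_eq, Set.mem_union, Set.mem_Iio, Set.mem_Ioi, gt_iff_lt, lt_abs]
    constructor
    · rintro (h | h)
      · right; linarith
      · left; linarith
    · rintro (h | h)
      · right; linarith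
      · left; linarith
  have hmeas : MeasurableSet {x : ℝ | |x + b| > c} := by
    rw [hset]; exact measurableSet_Iio.union measurableSet_Ioi
  have hstep : P {ω | |Y ω + b| > c} = ν {x : ℝ | |x + b| > c} := by
    rw [← hY, Measure.map_apply_of_aemeasurable hYm hmeas]
    rfl
  rw [hstep, hset]
  have hdisj : Disjoint (Set.Iio (-c - b)) (Set.Ioi (c - b)) := by
    rw [Set.disjoint_left]
    intro x hx hx'
    simp only [Set.mem_Iio, Set.mem_Ioi] at hx hx'
    linarith
  rw [measure_union hdisj measurableSet_Ioi]
  have hIio : ν (Set.Iio (-c - b)) = ENNReal.ofReal (Phi ((-c - b) / σ)) := by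
    rw [hν, gauss_Iio _ hv, gauss_Iic_eq σ hσ]
  have hIoi : ν (Set.Ioi (c - b)) = ENNReal.ofReal (1 - Phi ((c - b) / σ)) := by
    have hcompl : Set.Ioi (c - b) = (Set.Iic (c - b))ᶜ := (Set.compl_Iic).symm
    rw [hcompl, measure_compl measurableSet_Iic (measure_ne_top _ _), measure_univ,
      hν, gauss_Iic_eq σ hσ, ← ENNReal.ofReal_one,
      ← ENNReal.ofReal_sub _ (Phi_nonneg _)]
  rw [hIio, hIoi, ← ENNReal.ofReal_add (Phi_nonneg _) (by linarith [Phi_le_one ((c - b) / σ)])]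
  congr 1
  linarith
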